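/- For the multicalibration boosting dynamics with unit rescaling weights, the sum of squared gaps between successive predictions is finite and bounded as ∑_{t=0}^{∞} ‖f_{t+1} − f_t‖₂² ≤ η ‖y − f₀‖₂²; consequently ‖f_{t+1} − f_t‖₂ → 0 as t → ∞. -/

import Mathlib

open Matrix
open scoped RealInnerProductSpace

/-- The action of a real matrix on vectors of `EuclideanSpace`. -/
noncomputable def mulVecE {m n : Type*} [Fintype m] [Fintype n] [DecidableEq n]
    (A : Matrix m n ℝ) (v : EuclideanSpace ℝ n) : EuclideanSpace ℝ m :=
  Matrix.toEuclideanLin A v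

/-- **Summability of squared gaps for multicalibration boosting with unit weights.**
For the dynamics `f_{t+1} = f_t + η A(f_t)(y - f_t)` with orthogonal projections `A(f)`
and `η ∈ (0,1]`, the series of squared gaps is summable with
`∑_{t} ‖f_{t+1} - f_t‖₂² ≤ η ‖y - f₀‖₂²`, and consequently `‖f_{t+1} - f_t‖₂ → 0`. -/
theorem multicalibration_boosting_sum_sq_gaps
    {n : ℕ} (y : EuclideanSpace ℝ (Fin n)) (η : ℝ) (hη0 : 0 < η) (hη1 : η ≤ 1)
    (A : EuclideanSpace ℝ (Fin n) → Matrix (Fin n) (Fin n) ℝ)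
    (hAsymm : ∀ f, (A f)ᵀ = A f) (hAproj : ∀ f, A f * A f = A f)
    (f : ℕ → EuclideanSpace ℝ (Fin n))
    (hf : ∀ t, f (t + 1) = f t + η • mulVecE (A (f t)) (y - f t)) :
    Summable (fun t : ℕ => ‖f (t + 1) - f t‖ ^ 2) ∧
      (∑' t : ℕ, ‖f (t + 1) - f t‖ ^ 2) ≤ η * ‖y - f 0‖ ^ 2 ∧
      Filter.Tendsto (fun t : ℕ => ‖f (t + 1) - f t‖) Filter.atTop (nhds 0) := by
  -- per-step key inequality
  have key : ∀ t, ‖f (t + 1) - f t‖ ^ 2 ≤ η * (‖y - f t‖ ^ 2 - ‖y - f (t + 1)‖ ^ 2) := by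
    intro t
    set P : EuclideanSpace ℝ (Fin n) →ₗ[ℝ] EuclideanSpace ℝ (Fin n) :=
      Matrix.toEuclideanLin (A (f t)) with hP
    set g : EuclideanSpace ℝ (Fin n) := y - f t with hg
    have hadj : LinearMap.adjoint P = P := by
      rw [hP, ← Matrix.toEuclideanLin_conjTranspose_eq_adjoint]
      congr 1
      rw [Matrix.conjTranspose_eq_transpose_of_trivial, hAsymm]
    have hcomp : P (P g) = P g := by
      simp only [hP, Matrix.toEuclideanLin_apply, Equiv.apply_symm_apply,
        Matrix.mulVec_mulVec, hAproj]
    have hinner : (inner ℝ g (P g) : ℝ) = ‖P g‖ ^ 2 := by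
      have h1 : (inner ℝ (P g) (P g) : ℝ) = inner ℝ g (P (P g)) := by
        rw [← LinearMap.adjoint_inner_left, hadj]
        exact real_inner_comm _ _
      rw [hcomp] at h1
      rw [← h1, real_inner_self_eq_norm_sq]
    have hstep : f (t + 1) - f t = η • P g := by
      rw [hf t]; abel_nf; simp [mulVecE, hP, hg]; rw [smul_sub]; abel
    have hnext : y - f (t + 1) = g - η • P g := by
      rw [hf t]; simp [mulVecE, hP, hg]; abel
    have hd : ‖f (t + 1) - f t‖ ^ 2 = η ^ 2 * ‖P g‖ ^ 2 := by
      rw [hstep, norm_smul]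
      simp [mul_pow, abs_of_pos hη0]
    have hn : ‖y - f (t + 1)‖ ^ 2 = ‖g‖ ^ 2 - (2 * η - η ^ 2) * ‖P g‖ ^ 2 := by
      rw [hnext, norm_sub_sq_real, inner_smul_right, hinner, norm_smul]
      simp [mul_pow, abs_of_pos hη0]
      ring
    rw [hd, hn]
    nlinarith [norm_nonneg (P g), sq_nonneg ‖P g‖]
  have hnonneg : ∀ t : ℕ, 0 ≤ ‖f (t + 1) - f t‖ ^ 2 := fun t => sq_nonneg _
  have hsum : ∀ N : ℕ, ∑ t ∈ Finset.range N, ‖f (t + 1) - f t‖ ^ 2 ≤ η * ‖y - f 0‖ ^ 2 := by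
    intro N
    have htel : ∑ t ∈ Finset.range N, ‖f (t + 1) - f t‖ ^ 2 ≤
        η * (‖y - f 0‖ ^ 2 - ‖y - f N‖ ^ 2) := by
      induction N with
      | zero => simp
      | succ N ih =>
        rw [Finset.sum_range_succ]
        have := key N
        nlinarith
    nlinarith [sq_nonneg ‖y - f N‖, hη0.le]
  have hS : Summable (fun t : ℕ => ‖f (t + 1) - f t‖ ^ 2) :=
    summable_of_sum_range_le hnonneg hsum
  refine ⟨hS, Summable.tsum_le_of_sum_range_le hS hsum, ?_⟩
  have h2 : Filter.Tendsto (fun t : ℕ => ‖f (t + 1) - f t‖ ^ 2) Filter.atTop (nhds 0) :=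
    hS.tendsto_atTop_zero
  have h3 := (Real.continuous_sqrt.tendsto 0).comp h2
  simpa [Function.comp_def, Real.sqrt_sq (norm_nonneg _)] using h3
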